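/- Trahan-type condition for Pawlikowska's theorem: Let n be a positive integer and let f : ℝ → ℝ be n-times differentiable at every point of the closed interval [a,b] (with a < b). Set 𝔗_f(a) = T_{n-1}(f,b)(a) - f(a). If ( f^{(n)}(a)·(a-b)^n/n! + 𝔗_f(a) ) · ( f^{(n)}(b)·(a-b)^n/n! + 𝔗_f(a) ) ≥ 0, then there exists a point η ∈ (a,b] such that (f(η) - f(a))/(η - a) = Σ_{i=1}^{n} ((-1)^{i+1}/i!) · (η-a)^{i-1} · f^{(i)}(η); equivalently, f(a) = T_n(f,η)(a). -/

import Mathlib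

open Finset Filter Set Topology

lemma alt_inv_sum (k : ℕ) :
    ∑ i ∈ range (k+1), (-1:ℝ)^i / (i.factorial * (k-i).factorial)
      = (if k = 0 then 1 else 0) / k.factorial := by
  have h : ∀ i ∈ range (k+1), (-1:ℝ)^i / (i.factorial * (k-i).factorial)
      = (-1:ℝ)^i * (k.choose i) / k.factorial := by
    intro i hi
    have hik : i ≤ k := by simpa using Nat.lt_succ_iff.mp (mem_range.mp hi)
    have := Nat.choose_mul_factorial_mul_factorial hik
    have h2 : ((k.choose i : ℝ)) * (i.factorial * (k-i).factorial) = k.factorial := by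
      exact_mod_cast by push_cast [← this]; ring
    have hfi : (i.factorial : ℝ) ≠ 0 := by positivity
    have hfk : ((k-i).factorial : ℝ) ≠ 0 := by positivity
    have hfkk : (k.factorial : ℝ) ≠ 0 := by positivity
    rw [div_eq_div_iff (by positivity) hfkk, mul_assoc, h2]
  rw [Finset.sum_congr rfl h]
  rw [← Finset.sum_div]
  congr 1
  have h3 : ((∑ i ∈ range (k + 1), (-1:ℤ) ^ i * ↑(k.choose i) : ℤ) : ℝ)
      = ((if k = 0 then 1 else 0 : ℤ) : ℝ) := by
    rw [@Int.alternating_sum_range_choose k]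
  push_cast at h3
  rw [h3]

lemma tri (N : ℕ) (c : ℕ → ℝ) (y : ℝ) :
    ∑ i ∈ range (N+1), ∑ j ∈ range (N+1-i),
      c (i+j) * (-1:ℝ)^i * y^(i+j) / (i.factorial * j.factorial) = c 0 := by
  have h1 : ∑ i ∈ range (N+1), ∑ j ∈ range (N+1-i),
      c (i+j) * (-1:ℝ)^i * y^(i+j) / (i.factorial * j.factorial)
      = ∑ k ∈ range (N+1), ∑ i ∈ range (k+1),
        c k * y^k * ((-1:ℝ)^i / (i.factorial * (k-i).factorial)) := by
    rw [Finset.sum_sigma', Finset.sum_sigma']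
    apply Finset.sum_nbij' (fun p => ⟨p.1 + p.2, p.1⟩) (fun p => ⟨p.2, p.1 - p.2⟩)
    · rintro ⟨i, j⟩ hp
      simp only [Finset.mem_sigma, Finset.mem_range] at hp ⊢
      omega
    · rintro ⟨k, i⟩ hp
      simp only [Finset.mem_sigma, Finset.mem_range] at hp ⊢
      omega
    · rintro ⟨i, j⟩ hp; simp
    · rintro ⟨k, i⟩ hp
      simp only [Finset.mem_sigma, Finset.mem_range] at hp
      simp only [Sigma.mk.inj_iff]
      constructor <;> [omega; rfl]
    · rintro ⟨i, j⟩ hp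
      simp only [Finset.mem_sigma, Finset.mem_range] at hp
      have : i + j - i = j := by omega
      rw [this]
      ring
  rw [h1]
  have h2 : ∀ k ∈ range (N+1), ∑ i ∈ range (k+1),
      c k * y^k * ((-1:ℝ)^i / (i.factorial * (k-i).factorial))
      = if k = 0 then c 0 else 0 := by
    intro k _
    rw [← Finset.mul_sum, alt_inv_sum]
    split
    · subst ‹k = 0›; simp
    · simp
  rw [Finset.sum_congr rfl h2]
  simp

lemma sum_at_center (m : ℕ) (g : ℕ → ℝ) :
    ∑ j ∈ Finset.range (m+1), g j * (0:ℝ)^j / (j.factorial:ℝ) = g 0 := by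
  rw [Finset.sum_eq_single 0]
  · simp
  · intro j _ hj; rw [zero_pow hj]; ring
  · simp

lemma peano (a b : ℝ) (hab : a < b) :
    ∀ m, 1 ≤ m → ∀ ψ : ℕ → ℝ → ℝ,
    (∀ i < m, ∀ x ∈ Set.Icc a b, HasDerivWithinAt (ψ i) (ψ (i+1) x) (Set.Icc a b) x) →
    Filter.Tendsto
      (fun x => (ψ 0 x - ∑ j ∈ Finset.range (m+1), ψ j a * (x-a)^j / (j.factorial:ℝ)) / (x-a)^m)
      (𝓝[>] a) (𝓝 0) := by
  intro m hm
  induction m, hm using Nat.le_induction with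
  | base =>
    intro ψ hψ
    have hder : HasDerivWithinAt (ψ 0) (ψ 1 a) (Set.Icc a b) a :=
      hψ 0 (by norm_num) a ⟨le_refl a, le_of_lt hab⟩
    have hmem : Set.Icc a b \ {a} ∈ 𝓝[>] a :=
      Filter.mem_of_superset (Ioc_mem_nhdsGT_of_mem ⟨le_refl a, hab⟩)
        (fun x hx => ⟨⟨le_of_lt hx.1, hx.2⟩, ne_of_gt hx.1⟩)
    have T : Filter.Tendsto (slope (ψ 0) a) (𝓝[>] a) (𝓝 (ψ 1 a)) :=
      (hasDerivWithinAt_iff_tendsto_slope.mp hder).mono_left (nhdsWithin_le_of_mem hmem)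
    have T2 : Filter.Tendsto (fun x => slope (ψ 0) a x - ψ 1 a) (𝓝[>] a) (𝓝 0) := by
      simpa using T.sub_const (ψ 1 a)
    apply T2.congr'
    filter_upwards [self_mem_nhdsWithin] with x hx
    have hxa : x - a ≠ 0 := sub_ne_zero.mpr (ne_of_gt hx)
    rw [Finset.sum_range_succ, Finset.sum_range_one]
    simp only [pow_zero, pow_one, Nat.factorial_zero, Nat.factorial_one, Nat.cast_one,
      slope_def_field]
    field_simp
    ring
  | succ m hm IH =>
    intro ψ hψ
    set F : ℝ → ℝ := fun x => ψ 0 x - ∑ j ∈ Finset.range (m+2), ψ j a * (x-a)^j / (j.factorial:ℝ)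
      with hF
    set F' : ℝ → ℝ := fun t => ψ 1 t - ∑ j ∈ Finset.range (m+1), ψ (j+1) a * (t-a)^j / (j.factorial:ℝ)
      with hF'def
    have hF' : ∀ t ∈ Set.Icc a b, HasDerivWithinAt F (F' t) (Set.Icc a b) t := by
      intro t ht
      have hpoly : HasDerivAt (fun x => ∑ j ∈ Finset.range (m+2), ψ j a * (x-a)^j / (j.factorial:ℝ))
          (∑ j ∈ Finset.range (m+2), ψ j a * ((j:ℝ) * (t-a)^(j-1) * 1) / (j.factorial:ℝ)) t := by
        apply HasDerivAt.fun_sum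
        intro j _
        exact ((((hasDerivAt_id t).sub_const a).pow j).const_mul (ψ j a)).div_const _
      have heq : ∑ j ∈ Finset.range (m+2), ψ j a * ((j:ℝ) * (t-a)^(j-1) * 1) / (j.factorial:ℝ)
          = ∑ j ∈ Finset.range (m+1), ψ (j+1) a * (t-a)^j / (j.factorial:ℝ) := by
        rw [Finset.sum_range_succ']
        simp only [Nat.cast_zero, zero_mul, mul_zero, zero_div, add_zero, Nat.cast_ofNat,
          Nat.succ_sub_one, mul_one]
        apply Finset.sum_congr rfl
        intro j _
        rw [Nat.factorial_succ]
        have h1 : (j.factorial:ℝ) ≠ 0 := by positivity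
        push_cast
        field_simp
      rw [heq] at hpoly
      exact (hψ 0 (by omega) t ht).sub hpoly.hasDerivWithinAt
    have hIH : Filter.Tendsto (fun x => F' x / (x-a)^m) (𝓝[>] a) (𝓝 0) := by
      exact IH (fun i => ψ (i+1)) (fun i hi x hx => hψ (i+1) (by omega) x hx)
    have hFa : F a = 0 := by
      have h0 : ∑ j ∈ Finset.range (m+2), ψ j a * (0:ℝ)^j / (j.factorial:ℝ) = ψ 0 a := by
        simpa using sum_at_center (m+1) (fun j => ψ j a)
      simp [hF, h0]
    have hF'a : F' a = 0 := by
      have h0 : ∑ j ∈ Finset.range (m+1), ψ (j+1) a * (0:ℝ)^j / (j.factorial:ℝ) = ψ 1 a := by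
        simpa using sum_at_center m (fun j => ψ (j+1) a)
      simp [hF'def, h0]
    rw [NormedAddCommGroup.tendsto_nhds_zero]
    intro ε hε
    have hε2 : 0 < ε/2 := by linarith
    have hev : {x | ‖F' x / (x-a)^m‖ < ε/2} ∩ Set.Ioc a b ∈ 𝓝[>] a := by
      apply Filter.inter_mem
      · exact (NormedAddCommGroup.tendsto_nhds_zero.mp hIH) (ε/2) hε2
      · exact Ioc_mem_nhdsGT_of_mem ⟨le_refl a, hab⟩
    obtain ⟨u, hu, hsub⟩ := mem_nhdsGT_iff_exists_Ioc_subset.mp hev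
    filter_upwards [Ioc_mem_nhdsGT_of_mem ⟨le_refl a, hu⟩] with x hx
    have hxE := hsub hx
    have hxab : x ∈ Set.Ioc a b := hxE.2
    have hxa : 0 < x - a := sub_pos.mpr hxab.1
    -- derivative bound on Icc a x
    have hbound : ∀ t ∈ Set.Icc a x, ‖F' t‖ ≤ ε/2 * (x-a)^m := by
      intro t ht
      rcases eq_or_lt_of_le ht.1 with h | h
      · rw [← h, hF'a]; simp; positivity
      · have htE := hsub ⟨h, le_trans ht.2 hx.2⟩
        have h1 : ‖F' t / (t-a)^m‖ < ε/2 := htE.1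
        have hta : 0 < t - a := sub_pos.mpr h
        have h2 : ‖F' t‖ < ε/2 * (t-a)^m := by
          rw [norm_div] at h1
          have : ‖(t-a)^m‖ = (t-a)^m := by
            rw [Real.norm_eq_abs, abs_of_pos (by positivity)]
          rw [this] at h1
          calc ‖F' t‖ = ‖F' t‖ / (t-a)^m * (t-a)^m := by field_simp
          _ < ε/2 * (t-a)^m := by
            apply mul_lt_mul_of_pos_right h1 (by positivity)
        calc ‖F' t‖ ≤ ε/2 * (t-a)^m := le_of_lt h2
        _ ≤ ε/2 * (x-a)^m := by
          apply mul_le_mul_of_nonneg_left _ (le_of_lt hε2)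
          exact pow_le_pow_left₀ (le_of_lt hta) (by linarith [ht.2]) m
    have hsubset : Set.Icc a x ⊆ Set.Icc a b := Set.Icc_subset_Icc le_rfl hxab.2
    have hmvt := (convex_Icc a x).norm_image_sub_le_of_norm_hasDerivWithin_le
      (fun t ht => (hF' t (hsubset ht)).mono hsubset) hbound
      (Set.left_mem_Icc.mpr (le_of_lt (by linarith))) (Set.right_mem_Icc.mpr (le_of_lt (by linarith)))
    rw [hFa, sub_zero] at hmvt
    have hFx : ‖F x‖ ≤ ε/2 * (x-a)^(m+1) := by
      calc ‖F x‖ ≤ ε/2 * (x-a)^m * ‖x - a‖ := hmvt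
      _ = ε/2 * (x-a)^(m+1) := by
        rw [Real.norm_eq_abs, abs_of_pos hxa, pow_succ]; ring
    have : ‖F x / (x-a)^(m+1)‖ ≤ ε/2 := by
      rw [norm_div]
      have hn : ‖(x-a)^(m+1)‖ = (x-a)^(m+1) := by
        rw [Real.norm_eq_abs, abs_of_pos (by positivity)]
      rw [hn, div_le_iff₀ (by positivity)]
      calc ‖F x‖ ≤ ε/2 * (x-a)^(m+1) := hFx
      _ = ε/2 * (x-a)^(m+1) := rfl
    calc ‖(ψ 0 x - ∑ j ∈ Finset.range (m+1+1), ψ j a * (x-a)^j / (j.factorial:ℝ)) / (x-a)^(m+1)‖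
        = ‖F x / (x-a)^(m+1)‖ := rfl
    _ ≤ ε/2 := this
    _ < ε := by linarith

lemma trahan_core (H G : ℝ → ℝ) (a b L : ℝ) (hab : a < b)
    (h1 : ∀ x ∈ Set.Ioo a b, HasDerivAt H (G x) x)
    (h2 : HasDerivWithinAt H (G b) (Set.Icc a b) b)
    (hlim : Filter.Tendsto H (𝓝[>] a) (𝓝 L))
    (hGb : G b < 0) (hHb : L ≤ H b) :
    ∃ η ∈ Set.Ioo a b, G η = 0 := by
  have hslope : Filter.Tendsto (slope H b) (𝓝[<] b) (𝓝 (G b)) := by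
    apply (hasDerivWithinAt_iff_tendsto_slope.mp h2).mono_left
    apply nhdsWithin_le_of_mem
    apply Filter.mem_of_superset (Ioo_mem_nhdsLT_of_mem ⟨hab, le_refl b⟩)
    intro y hy
    exact ⟨⟨le_of_lt hy.1, le_of_lt hy.2⟩, ne_of_lt hy.2⟩
  have hev1 : ∀ᶠ y in 𝓝[<] b, slope H b y < 0 := hslope.eventually_lt_const hGb
  have hev2 : Set.Ioo a b ∈ 𝓝[<] b := Ioo_mem_nhdsLT_of_mem ⟨hab, le_refl b⟩
  obtain ⟨x, hxs, hx⟩ := (hev1.and (Filter.eventually_mem_set.mpr hev2)).exists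
  have hxb : H b < H x := by
    rw [slope_def_field] at hxs
    have h4 : x - b < 0 := sub_neg.mpr hx.2
    rcases div_neg_iff.mp hxs with ⟨h5, h6⟩ | ⟨h5, h6⟩
    · linarith
    · linarith
  have hLx : L < H x := lt_of_le_of_lt hHb hxb
  have hev3 : ∀ᶠ t in 𝓝[>] a, H t < H x := hlim.eventually_lt_const hLx
  have hev4 : Set.Ioo a x ∈ 𝓝[>] a := Ioo_mem_nhdsGT_of_mem ⟨le_refl a, hx.1⟩
  obtain ⟨t, ht1, ht2⟩ := (hev3.and (Filter.eventually_mem_set.mpr hev4)).exists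
  have hta : a < t := ht2.1
  have htx : t < x := ht2.2
  have htb : t < b := lt_trans htx hx.2
  have hcont : ContinuousOn H (Set.Icc t b) := by
    intro y hy
    rcases eq_or_lt_of_le hy.2 with rfl | hyb
    · exact h2.continuousWithinAt.mono (Set.Icc_subset_Icc (le_of_lt hta) le_rfl)
    · exact ((h1 y ⟨lt_of_lt_of_le hta hy.1, hyb⟩).continuousAt).continuousWithinAt
  obtain ⟨η, hη, hmax⟩ := isCompact_Icc.exists_isMaxOn (Set.nonempty_Icc.mpr (le_of_lt htb)) hcont
  have hxmem : x ∈ Set.Icc t b := ⟨le_of_lt htx, le_of_lt hx.2⟩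
  have hηx : H x ≤ H η := hmax hxmem
  have hηb : η ≠ b := by
    intro h; subst h; exact absurd (lt_of_lt_of_le hxb hηx) (lt_irrefl _)
  have hηt : η ≠ t := by
    intro h; subst h; exact absurd (lt_of_lt_of_le ht1 hηx) (lt_irrefl _)
  have hηmem : η ∈ Set.Ioo t b := ⟨lt_of_le_of_ne hη.1 (Ne.symm hηt), lt_of_le_of_ne hη.2 hηb⟩
  have hηab : η ∈ Set.Ioo a b := ⟨lt_trans hta hηmem.1, hηmem.2⟩
  have hloc : IsLocalMax H η := hmax.isLocalMax (Icc_mem_nhds hηmem.1 hηmem.2)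
  exact ⟨η, hηab, hloc.hasDerivAt_eq_zero (h1 η hηab)⟩

lemma hderiv (a b : ℝ) (m : ℕ) (D : ℕ → ℝ → ℝ)
    (hder : ∀ i < m + 1, ∀ x ∈ Set.Icc a b, HasDerivWithinAt (D i) (D (i+1) x) (Set.Icc a b) x)
    (x : ℝ) (hx : x ∈ Set.Icc a b) :
    HasDerivWithinAt (fun y => (∑ i ∈ Finset.range (m+1), D i y * (a-y)^i / (i.factorial:ℝ)) - D 0 a)
      (D (m+1) x * (a-x)^m / (m.factorial:ℝ)) (Set.Icc a b) x := by
  set u : ℕ → ℝ := fun i => if i = 0 then 0 else D i x * (a-x)^(i-1) / ((i-1).factorial:ℝ) with hu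
  have hterm : ∀ i ∈ Finset.range (m+1),
      HasDerivWithinAt (fun y => D i y * (a-y)^i / (i.factorial:ℝ)) (u (i+1) - u i) (Set.Icc a b) x := by
    intro i hi
    have hi' : i < m + 1 := Finset.mem_range.mp hi
    have hprod := ((hder i hi' x hx).mul
      (((hasDerivWithinAt_id x (Set.Icc a b)).const_sub a).pow i)).div_const (i.factorial:ℝ)
    refine hprod.congr_deriv ?_
    rcases Nat.eq_zero_or_pos i with rfl | hpos
    · simp [hu]
    · obtain ⟨k, rfl⟩ : ∃ k, i = k + 1 := ⟨i - 1, by omega⟩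
      simp only [hu, if_neg (Nat.succ_ne_zero k), if_neg (Nat.succ_ne_zero (k+1)), Nat.add_sub_cancel, Pi.pow_apply, id_eq]
      have h1 : ((k+1).factorial : ℝ) = (k+1) * k.factorial := by
        rw [Nat.factorial_succ]; push_cast; ring
      have h2 : (k.factorial:ℝ) ≠ 0 := by positivity
      have h3 : ((k+1).factorial:ℝ) ≠ 0 := by positivity
      rw [h1]
      field_simp [h1]
      push_cast
      ring
  have hsum := (HasDerivWithinAt.fun_sum hterm).sub_const (D 0 a)
  refine hsum.congr_deriv ?_
  rw [Finset.sum_range_sub u (m+1)]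
  simp [hu]

lemma hlimit (a b : ℝ) (hab : a < b) (n : ℕ) (hn : 1 ≤ n) (D : ℕ → ℝ → ℝ)
    (hder : ∀ i < n, ∀ x ∈ Set.Icc a b, HasDerivWithinAt (D i) (D (i+1) x) (Set.Icc a b) x) :
    Filter.Tendsto
      (fun x => ((∑ i ∈ Finset.range n, D i x * (a-x)^i / (i.factorial:ℝ)) - D 0 a) / (x-a)^n)
      (𝓝[>] a) (𝓝 ((-1:ℝ)^(n-1) * D n a / (n.factorial:ℝ))) := by
  set L : ℝ := (-1:ℝ)^(n-1) * D n a / (n.factorial:ℝ) with hL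
  set E : ℕ → ℝ → ℝ := fun i x =>
    (D i x - ∑ j ∈ Finset.range (n-i+1), D (i+j) a * (x-a)^j / (j.factorial:ℝ)) / (x-a)^(n-i)
    with hE_def
  have hE : ∀ i < n, Filter.Tendsto (E i) (𝓝[>] a) (𝓝 0) := by
    intro i hi
    exact peano a b hab (n-i) (by omega) (fun j => D (i+j))
      (fun j hj x hx => hder (i+j) (by omega) x hx)
  have base : Filter.Tendsto
      (fun x => (∑ i ∈ Finset.range n, (-1:ℝ)^i / (i.factorial:ℝ) * E i x) + L)
      (𝓝[>] a) (𝓝 L) := by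
    have t1 : Filter.Tendsto (fun x => ∑ i ∈ Finset.range n, (-1:ℝ)^i / (i.factorial:ℝ) * E i x)
        (𝓝[>] a) (𝓝 0) := by
      have := tendsto_finset_sum (Finset.range n)
        (fun i hi => ((hE i (Finset.mem_range.mp hi)).const_mul ((-1:ℝ)^i / (i.factorial:ℝ))))
      simpa using this
    simpa using t1.add (tendsto_const_nhds (x := L))
  apply base.congr'
  filter_upwards [self_mem_nhdsWithin] with x hx
  have hy : x - a ≠ 0 := sub_ne_zero.mpr (ne_of_gt hx)
  have hyn : (x-a)^n ≠ 0 := pow_ne_zero n hy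
  have hstep : ∀ i ∈ Finset.range n, (-1:ℝ)^i / (i.factorial:ℝ) * E i x
      = (D i x * (a-x)^i / (i.factorial:ℝ)
          - ∑ j ∈ Finset.range (n+1-i), D (i+j) a * (-1:ℝ)^i * (x-a)^(i+j) / ((i.factorial:ℝ) * (j.factorial:ℝ))) / (x-a)^n := by
    intro i hi
    have hi' : i < n := Finset.mem_range.mp hi
    have hr : n - i + 1 = n + 1 - i := by omega
    have hpow : (x-a)^n = (x-a)^(n-i) * (x-a)^i := by
      rw [← pow_add]; congr 1; omega
    have hneg : (a-x)^i = (-1:ℝ)^i * (x-a)^i := by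
      rw [show a - x = -(x-a) by ring, neg_pow]
    have hsum : ∑ j ∈ Finset.range (n+1-i), D (i+j) a * (-1:ℝ)^i * (x-a)^(i+j) / ((i.factorial:ℝ) * (j.factorial:ℝ))
        = ((-1:ℝ)^i * (x-a)^i / (i.factorial:ℝ)) *
          ∑ j ∈ Finset.range (n-i+1), D (i+j) a * (x-a)^j / (j.factorial:ℝ) := by
      rw [hr, Finset.mul_sum]
      apply Finset.sum_congr rfl
      intro j _
      rw [pow_add]
      have h2 : (j.factorial:ℝ) ≠ 0 := by positivity
      have h3 : (i.factorial:ℝ) ≠ 0 := by positivity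
      field_simp
    rw [hsum, hE_def]
    simp only []
    rw [hneg, hpow]
    set P := ∑ j ∈ Finset.range (n-i+1), D (i+j) a * (x-a)^j / (j.factorial:ℝ)
    have hu : (x-a)^(n-i) ≠ 0 := pow_ne_zero _ hy
    have hv : (x-a)^i ≠ 0 := pow_ne_zero _ hy
    have h3 : (i.factorial:ℝ) ≠ 0 := by positivity
    field_simp
  rw [Finset.sum_congr rfl hstep, ← Finset.sum_div, Finset.sum_sub_distrib]
  have hdouble : ∑ i ∈ Finset.range n, ∑ j ∈ Finset.range (n+1-i),
      D (i+j) a * (-1:ℝ)^i * (x-a)^(i+j) / ((i.factorial:ℝ) * (j.factorial:ℝ))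
      = D 0 a + L * (x-a)^n := by
    have htri := tri n (fun k => D k a) (x-a)
    rw [Finset.sum_range_succ] at htri
    have hterm : ∑ j ∈ Finset.range (n+1-n), (fun k => D k a) (n+j) * (-1:ℝ)^n * (x-a)^(n+j)
        / ((n.factorial:ℝ) * (j.factorial:ℝ)) = D n a * (-1:ℝ)^n * (x-a)^n / (n.factorial:ℝ) := by
      rw [show n+1-n = 1 by omega, Finset.sum_range_one]
      simp
    rw [hterm] at htri
    have hLL : D n a * (-1:ℝ)^n * (x-a)^n / (n.factorial:ℝ) = - (L * (x-a)^n) := by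
      rw [hL]
      obtain ⟨m, rfl⟩ : ∃ m, n = m + 1 := ⟨n - 1, by omega⟩
      simp only [Nat.add_sub_cancel]
      rw [pow_succ]
      ring
    -- htri : ∑_{i<n} inner + D n a * (-1)^n (x-a)^n/n! = D 0 a
    have := htri
    -- convert cast shapes: the inner sums in htri use (fun k => D k a)
    calc ∑ i ∈ Finset.range n, ∑ j ∈ Finset.range (n+1-i),
        D (i+j) a * (-1:ℝ)^i * (x-a)^(i+j) / ((i.factorial:ℝ) * (j.factorial:ℝ))
        = D 0 a - D n a * (-1:ℝ)^n * (x-a)^n / (n.factorial:ℝ) := by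
          rw [← htri]; push_cast; ring
    _ = D 0 a + L * (x-a)^n := by rw [hLL]; ring
  rw [hdouble]
  field_simp
  ring

lemma main_aux (a b : ℝ) (hab : a < b) (n : ℕ) (hn : 1 ≤ n) (D : ℕ → ℝ → ℝ)
    (hder : ∀ i < n, ∀ x ∈ Set.Icc a b, HasDerivWithinAt (D i) (D (i+1) x) (Set.Icc a b) x)
    (hcond : (D n a * (a-b)^n / (n.factorial:ℝ) +
        ((∑ i ∈ Finset.range n, D i b / (i.factorial:ℝ) * (a-b)^i) - D 0 a)) *
      (D n b * (a-b)^n / (n.factorial:ℝ) +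
        ((∑ i ∈ Finset.range n, D i b / (i.factorial:ℝ) * (a-b)^i) - D 0 a)) ≥ 0) :
    ∃ η ∈ Set.Ioc a b, (D 0 η - D 0 a) / (η - a) =
      ∑ i ∈ Finset.Icc 1 n, (-1:ℝ)^(i+1) / (i.factorial:ℝ) * (η-a)^(i-1) * D i η := by
  obtain ⟨m, rfl⟩ : ∃ m, n = m + 1 := ⟨n - 1, by omega⟩
  set h : ℝ → ℝ :=
    fun y => (∑ i ∈ Finset.range (m+1), D i y * (a-y)^i / (i.factorial:ℝ)) - D 0 a with hh_def
  set hd : ℝ → ℝ := fun y => D (m+1) y * (a-y)^m / (m.factorial:ℝ) with hhd_def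
  set H : ℝ → ℝ := fun y => h y / (y-a)^(m+1) with hH_def
  set G : ℝ → ℝ :=
    fun y => (hd y * (y-a)^(m+1) - h y * ((m+1:ℝ) * (y-a)^m)) / ((y-a)^(m+1))^2 with hG_def
  set L : ℝ := (-1:ℝ)^m * D (m+1) a / ((m+1).factorial:ℝ) with hL_def
  have hβ : (0:ℝ) < b - a := by linarith
  have hmf : (m.factorial:ℝ) ≠ 0 := by positivity
  have hm1f : ((m+1).factorial:ℝ) ≠ 0 := by positivity
  have hfact : ((m+1).factorial:ℝ) = (m+1) * (m.factorial:ℝ) := by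
    rw [Nat.factorial_succ]; push_cast; ring
  -- derivative of H
  have hGder : ∀ x ∈ Set.Icc a b, x ≠ a → HasDerivWithinAt H (G x) (Set.Icc a b) x := by
    intro x hx hxa
    have hpow : HasDerivWithinAt (fun y => (y-a)^(m+1)) ((m+1:ℝ) * (x-a)^m) (Set.Icc a b) x := by
      have := (((hasDerivWithinAt_id x (Set.Icc a b)).sub_const a)).fun_pow (m+1)
      simpa using this
    exact (hderiv a b m D hder x hx).div hpow (pow_ne_zero _ (sub_ne_zero.mpr hxa))
  have h1 : ∀ x ∈ Set.Ioo a b, HasDerivAt H (G x) x := fun x hx =>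
    (hGder x (Set.Ioo_subset_Icc_self hx) (ne_of_gt hx.1)).hasDerivAt (Icc_mem_nhds hx.1 hx.2)
  have h2 : HasDerivWithinAt H (G b) (Set.Icc a b) b :=
    hGder b ⟨le_of_lt hab, le_rfl⟩ (ne_of_gt hab)
  have hlim : Filter.Tendsto H (𝓝[>] a) (𝓝 L) := by
    have := hlimit a b hab (m+1) (by omega) D hder
    simpa using this
  -- rewrite the sum in hcond as h b
  have hTb : (∑ i ∈ Finset.range (m+1), D i b / (i.factorial:ℝ) * (a-b)^i) - D 0 a = h b := by
    rw [hh_def]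
    congr 1
    apply Finset.sum_congr rfl
    intro i _
    ring
  rw [hTb] at hcond
  -- sign identity
  have hGbL : G b * (H b - L) ≤ 0 := by
    have heq : G b * (H b - L) = -((m+1:ℝ)) *
        ((D (m+1) a * (a-b)^(m+1) / ((m+1).factorial:ℝ) + h b) *
         (D (m+1) b * (a-b)^(m+1) / ((m+1).factorial:ℝ) + h b)) / (b-a)^(2*m+3) := by
      rw [hG_def, hH_def, hhd_def, hL_def]
      simp only []
      have e1 : (a-b)^(m+1) = -((-1:ℝ)^m * (b-a)^(m+1)) := by
        rw [show a-b = -(b-a) by ring, neg_pow, pow_succ]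
        ring
      have e2 : (a-b)^m = (-1:ℝ)^m * (b-a)^m := by
        rw [show a-b = -(b-a) by ring, neg_pow]
      have e3 : (b-a)^(m+1) = (b-a)^m * (b-a) := by rw [pow_succ]
      have e4 : (b-a)^(2*m+3) = (b-a)^m * (b-a)^m * ((b-a)*(b-a)*(b-a)) := by
        rw [← pow_add]
        rw [show (b-a)*(b-a)*(b-a) = (b-a)^3 by ring, ← pow_add]
        congr 1
        omega
      rw [e1, e2, e3, e4, hfact]
      have ht : (b-a)^m ≠ 0 := by positivity
      have hba : (b-a) ≠ 0 := ne_of_gt hβ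
      have hεval : ((-1:ℝ)^m) = 1 ∨ ((-1:ℝ)^m) = -1 := by
        rcases Nat.even_or_odd m with hpar | hpar
        · left; exact hpar.neg_one_pow
        · right; exact hpar.neg_one_pow
      rcases hεval with hε | hε <;> rw [hε] <;> field_simp <;> ring
    rw [heq]
    apply div_nonpos_of_nonpos_of_nonneg
    · have : (0:ℝ) < (m+1:ℝ) := by positivity
      nlinarith [hcond]
    · positivity
  have final : ∀ η ∈ Set.Ioc a b, G η = 0 →
      (D 0 η - D 0 a) / (η - a) =
      ∑ i ∈ Finset.Icc 1 (m+1), (-1:ℝ)^(i+1) / (i.factorial:ℝ) * (η-a)^(i-1) * D i η := by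
    intro η hη hGη
    have hηa : η - a ≠ 0 := sub_ne_zero.mpr (ne_of_gt hη.1)
    have hnum : hd η * (η-a)^(m+1) - h η * ((m+1:ℝ) * (η-a)^m) = 0 := by
      rw [hG_def] at hGη
      simp only [] at hGη
      exact (div_eq_zero_iff.mp hGη).resolve_right (pow_ne_zero _ (pow_ne_zero _ hηa))
    have key : hd η * (η - a) = h η * (m+1:ℝ) := by
      have hq : (hd η * (η-a) - h η * (m+1:ℝ)) * (η-a)^m = 0 := by
        rw [pow_succ] at hnum
        linear_combination hnum
      have h3 := (mul_eq_zero.mp hq).resolve_right (pow_ne_zero _ hηa)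
      linarith [h3]
    have hfa : D 0 a = ∑ i ∈ Finset.range (m+2), D i η * (a-η)^i / (i.factorial:ℝ) := by
      rw [Finset.sum_range_succ]
      rw [hhd_def, hh_def] at key
      simp only [] at key
      have e1 : (a-η)^(m+1) = -((a-η)^m * (η-a)) := by rw [pow_succ]; ring
      rw [e1, hfact]
      have hm1 : (m+1:ℝ) ≠ 0 := by positivity
      field_simp at key ⊢
      linear_combination key
    rw [div_eq_iff hηa]
    have lhs_eq : D 0 η - D 0 a
        = ∑ i ∈ Finset.range (m+1), -(D (i+1) η * (a-η)^(i+1) / ((i+1).factorial:ℝ)) := by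
      rw [hfa, Finset.sum_range_succ']
      simp
    rw [lhs_eq]
    rw [← Finset.Ico_add_one_right_eq_Icc, Finset.sum_Ico_eq_sum_range]
    rw [show m+1+1-1 = m+1 by omega]
    rw [Finset.sum_mul]
    apply Finset.sum_congr rfl
    intro i _
    rw [show 1+i-1 = i by omega]
    rw [Nat.add_comm 1 i]
    rw [show a-η = -(η-a) by ring, neg_pow]
    rw [pow_succ (-1:ℝ) (i+1), pow_succ (-1:ℝ) i, pow_succ (η-a) i]
    have hfi : ((i+1).factorial:ℝ) ≠ 0 := by positivity
    field_simp
  rcases lt_trichotomy (G b) 0 with hGb | hGb | hGb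
  · have hHbL : L ≤ H b := by nlinarith [hGbL]
    obtain ⟨η, hη, hGη⟩ := trahan_core H G a b L hab h1 h2 hlim hGb hHbL
    exact ⟨η, ⟨hη.1, le_of_lt hη.2⟩, final η ⟨hη.1, le_of_lt hη.2⟩ hGη⟩
  · exact ⟨b, ⟨hab, le_rfl⟩, final b ⟨hab, le_rfl⟩ hGb⟩
  · have hHbL : H b ≤ L := by nlinarith [hGbL]
    obtain ⟨η, hη, hGη⟩ := trahan_core (fun y => -H y) (fun y => -G y) a b (-L) hab
      (fun x hx => (h1 x hx).neg) h2.neg hlim.neg (by show -G b < 0; linarith)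
      (by simp only [neg_le_neg_iff]; exact hHbL)
    exact ⟨η, ⟨hη.1, le_of_lt hη.2⟩, final η ⟨hη.1, le_of_lt hη.2⟩ (neg_eq_zero.mp hGη)⟩

/-- **Trahan-type condition for Pawlikowska's theorem.** Let `f` be `n`-times
differentiable at every point of `[a,b]` (one-sidedly at the endpoints), where the
iterated derivatives are taken within `[a,b]`, and set
`𝔗_f(a) = T_{n-1}(f,b)(a) - f(a) = ∑_{i=0}^{n-1} (f⁽ⁱ⁾(b)/i!)·(a-b)^i - f(a)`. If
`(f⁽ⁿ⁾(a)·(a-b)^n/n! + 𝔗_f(a)) · (f⁽ⁿ⁾(b)·(a-b)^n/n! + 𝔗_f(a)) ≥ 0`, then there exists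
`η ∈ (a,b]` with `(f(η) - f(a))/(η - a) = ∑_{i=1}^{n} ((-1)^{i+1}/i!)·(η-a)^{i-1}·f⁽ⁱ⁾(η)`. -/
theorem trahan_condition_pawlikowska (f : ℝ → ℝ) (a b : ℝ) (n : ℕ) (hn : 1 ≤ n)
    (hab : a < b)
    (hf : ∀ i < n, ∀ x ∈ Set.Icc a b,
      DifferentiableWithinAt ℝ (iteratedDerivWithin i f (Set.Icc a b)) (Set.Icc a b) x)
    (hcond :
      (iteratedDerivWithin n f (Set.Icc a b) a * (a - b) ^ n / (Nat.factorial n) +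
          ((∑ i ∈ Finset.range n,
            iteratedDerivWithin i f (Set.Icc a b) b / (Nat.factorial i) * (a - b) ^ i) - f a)) *
        (iteratedDerivWithin n f (Set.Icc a b) b * (a - b) ^ n / (Nat.factorial n) +
          ((∑ i ∈ Finset.range n,
            iteratedDerivWithin i f (Set.Icc a b) b / (Nat.factorial i) * (a - b) ^ i) - f a))
        ≥ 0) :
    ∃ η ∈ Set.Ioc a b, (f η - f a) / (η - a) =
      ∑ i ∈ Finset.Icc 1 n, (-1 : ℝ) ^ (i + 1) / (Nat.factorial i) * (η - a) ^ (i - 1) *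
        iteratedDerivWithin i f (Set.Icc a b) η := by
  have hder : ∀ i < n, ∀ x ∈ Set.Icc a b,
      HasDerivWithinAt (iteratedDerivWithin i f (Set.Icc a b))
        (iteratedDerivWithin (i+1) f (Set.Icc a b) x) (Set.Icc a b) x := by
    intro i hi x hx
    rw [iteratedDerivWithin_succ]
    exact (hf i hi x hx).hasDerivWithinAt
  obtain ⟨η, hη, he⟩ := main_aux a b hab n hn
    (fun i => iteratedDerivWithin i f (Set.Icc a b)) hder
    (by simpa [iteratedDerivWithin_zero] using hcond)
  refine ⟨η, hη, ?_⟩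
  simpa [iteratedDerivWithin_zero] using he
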